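/- Let G be a group isomorphic to the alternating group A_4 acting on a finite set X of cardinality n. Suppose there are natural numbers a and b such that every element of G of order 2 fixes exactly a points of X and every element of G of order 3 fixes exactly b points of X. Then 12 divides n + 3a + 8b. -/

import Mathlib

/-- Burnside count for an action of `A₄` on a finite set of cardinality `n`:
if each element of order 2 fixes exactly `a` points and each element of
order 3 fixes exactly `b` points, then `12 ∣ n + 3a + 8b`. -/
theorem A4_burnside (G : Type*) [Group G] (X : Type*) [Fintype X] [DecidableEq X]
    [MulAction G X]
    (hG : Nonempty (G ≃* alternatingGroup (Fin 4)))
    (n : ℕ) (hn : Fintype.card X = n) (a b : ℕ)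
    (ha : ∀ g : G, orderOf g = 2 →
      (Finset.univ.filter fun x : X => g • x = x).card = a)
    (hb : ∀ g : G, orderOf g = 3 →
      (Finset.univ.filter fun x : X => g • x = x).card = b) :
    12 ∣ n + 3 * a + 8 * b := by
  classical
  obtain ⟨e⟩ := hG
  letI : Fintype G := Fintype.ofEquiv _ e.toEquiv.symm
  have hcardG : Fintype.card G = 12 := by
    rw [Fintype.card_congr e.toEquiv]; decide
  -- every element squares or cubes to 1
  have hcover : ∀ g : G, g ^ 2 = 1 ∨ g ^ 3 = 1 := by
    intro g
    have := (by decide : ∀ h : alternatingGroup (Fin 4), h ^ 2 = 1 ∨ h ^ 3 = 1) (e g)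
    rcases this with h | h
    · left; apply e.injective; rw [map_pow, map_one]; exact h
    · right; apply e.injective; rw [map_pow, map_one]; exact h
  have h2card : (Finset.univ.filter fun g : G => g ^ 2 = 1 ∧ g ≠ 1).card = 3 := by
    rw [Finset.card_equiv e.toEquiv (t := Finset.univ.filter
        fun h : alternatingGroup (Fin 4) => h ^ 2 = 1 ∧ h ≠ 1)]
    · decide
    · intro g
      simp only [Finset.mem_filter, Finset.mem_univ, true_and, ne_eq]
      show _ ↔ (e g) ^ _ = 1 ∧ ¬ e g = 1
      rw [← map_pow, EmbeddingLike.map_eq_one_iff, EmbeddingLike.map_eq_one_iff]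
  have h3card : (Finset.univ.filter fun g : G => g ^ 3 = 1 ∧ g ≠ 1).card = 8 := by
    rw [Finset.card_equiv e.toEquiv (t := Finset.univ.filter
        fun h : alternatingGroup (Fin 4) => h ^ 3 = 1 ∧ h ≠ 1)]
    · decide
    · intro g
      simp only [Finset.mem_filter, Finset.mem_univ, true_and, ne_eq]
      show _ ↔ (e g) ^ _ = 1 ∧ ¬ e g = 1
      rw [← map_pow, EmbeddingLike.map_eq_one_iff, EmbeddingLike.map_eq_one_iff]
  -- Burnside
  set c : G → ℕ := fun g => (Finset.univ.filter fun x : X => g • x = x).card with hc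
  have hburn : 12 ∣ ∑ g : G, c g := by
    have hfix : ∀ g : G, Fintype.card (MulAction.fixedBy X g) = c g := by
      intro g
      rw [hc]
      simp [MulAction.fixedBy, Fintype.card_subtype]
      convert Fintype.card_subtype (fun x : X => g • x = x)
      exact Fintype.card_congr' rfl
    have := MulAction.sum_card_fixedBy_eq_card_orbits_mul_card_group G X
    rw [hcardG] at this
    simp only [hfix] at this
    exact ⟨_, by rw [this, Nat.mul_comm]⟩
  -- compute the sum
  have hsum : ∑ g : G, c g = 3 * a + (8 * b + n) := by
    rw [← Finset.sum_filter_add_sum_filter_not Finset.univ (fun g => g ^ 2 = 1 ∧ g ≠ 1)]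
    have e1 : ∑ g ∈ Finset.univ.filter (fun g : G => g ^ 2 = 1 ∧ g ≠ 1), c g = 3 * a := by
      rw [Finset.sum_congr rfl (fun g hg => ?_), Finset.sum_const, h2card, smul_eq_mul]
      simp only [Finset.mem_filter] at hg
      exact ha g (orderOf_eq_prime hg.2.1 hg.2.2)
    rw [e1]
    congr 1
    rw [← Finset.sum_filter_add_sum_filter_not _ (fun g => g ^ 3 = 1 ∧ g ≠ 1)]
    have key : ∀ g : G, g ^ 2 = 1 → g ^ 3 = 1 → g = 1 := by
      intro g h2 h3
      have : g ^ 3 = g ^ 2 * g := by rw [pow_succ]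
      rw [h2, h3, one_mul] at this
      exact this.symm
    have hP3 : (Finset.univ.filter (fun g : G => ¬(g ^ 2 = 1 ∧ g ≠ 1))).filter
        (fun g => g ^ 3 = 1 ∧ g ≠ 1) = Finset.univ.filter (fun g => g ^ 3 = 1 ∧ g ≠ 1) := by
      ext g
      simp only [Finset.mem_filter, Finset.mem_univ, true_and, not_and, not_not]
      constructor
      · rintro ⟨-, h⟩; exact h
      · rintro ⟨h3, h1⟩
        exact ⟨fun h2 => key g h2 h3, h3, h1⟩
    have hrest : (Finset.univ.filter (fun g : G => ¬(g ^ 2 = 1 ∧ g ≠ 1))).filter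
        (fun g => ¬(g ^ 3 = 1 ∧ g ≠ 1)) = {1} := by
      ext g
      simp only [Finset.mem_filter, Finset.mem_univ, true_and, not_and, not_not,
        Finset.mem_singleton]
      constructor
      · rintro ⟨h2, h3⟩
        rcases hcover g with h | h
        · exact h2 h
        · exact h3 h
      · rintro rfl
        exact ⟨fun _ => rfl, fun _ => rfl⟩
    rw [hP3, hrest]
    have e3 : ∑ g ∈ Finset.univ.filter (fun g : G => g ^ 3 = 1 ∧ g ≠ 1), c g = 8 * b := by
      rw [Finset.sum_congr rfl (fun g hg => ?_), Finset.sum_const, h3card, smul_eq_mul]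
      simp only [Finset.mem_filter] at hg
      exact hb g (orderOf_eq_prime hg.2.1 hg.2.2)
    rw [e3, Finset.sum_singleton]
    congr 1
    rw [hc]
    simp only [one_smul]
    rw [Finset.filter_true, Finset.card_univ]
    exact hn
  rw [hsum] at hburn
  omega
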